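/- Let W : ℤ × ℤ → ℝ be finitely supported and suppose: (a) W·B₁ = Δ₁(W·A₁₁) + Δ₂(W·A₁₂) and W·B₂ = Δ₁(W·A₂₁) + Δ₂(W·A₂₂) hold pointwise on ℤ × ℤ, and (b) for every real polynomial g in two variables, ∑_x W(x)A₁₂(x)g(x−e₂) = ∑_x W(x)A₂₁(x)g(x−e₁). If u and v are real polynomials in two variables such that 𝒟u = λu and 𝒟v = μv pointwise on ℤ × ℤ with λ ≠ μ, then ∑_{x ∈ ℤ×ℤ} W(x)u(x)v(x) = 0; that is, polynomial eigenfunctions of 𝒟 with distinct eigenvalues are orthogonal with respect to W. -/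

import Mathlib

open MvPolynomial

noncomputable section

/-- Forward difference in the first variable. -/
def fd1 (u : ℤ × ℤ → ℝ) : ℤ × ℤ → ℝ := fun x => u (x.1 + 1, x.2) - u x

/-- Forward difference in the second variable. -/
def fd2 (u : ℤ × ℤ → ℝ) : ℤ × ℤ → ℝ := fun x => u (x.1, x.2 + 1) - u x

/-- Backward difference in the first variable. -/
def bd1 (u : ℤ × ℤ → ℝ) : ℤ × ℤ → ℝ := fun x => u x - u (x.1 - 1, x.2)

/-- Backward difference in the second variable. -/
def bd2 (u : ℤ × ℤ → ℝ) : ℤ × ℤ → ℝ := fun x => u x - u (x.1, x.2 - 1)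

/-- Evaluation of a two-variable real polynomial on the lattice `ℤ × ℤ`. -/
def pev (p : MvPolynomial (Fin 2) ℝ) : ℤ × ℤ → ℝ :=
  fun x => eval (fun i => if i = 0 then (x.1 : ℝ) else (x.2 : ℝ)) p

/-- The standard second order partial difference operator. -/
def Dop (A11 A12 A21 A22 B1 B2 : MvPolynomial (Fin 2) ℝ) (u : ℤ × ℤ → ℝ) : ℤ × ℤ → ℝ :=
  fun x => pev A11 x * fd1 (bd1 u) x + pev A12 x * fd1 (bd2 u) x
    + pev A21 x * fd2 (bd1 u) x + pev A22 x * fd2 (bd2 u) x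
    + pev B1 x * fd1 u x + pev B2 x * fd2 u x

lemma suppW {W : ℤ × ℤ → ℝ} (hW : (Function.support W).Finite) {F : ℤ × ℤ → ℝ}
    (h : ∀ x, W x = 0 → F x = 0) : (Function.support F).Finite :=
  hW.subset (fun x hx => by
    simp only [Function.mem_support] at hx ⊢
    exact fun h0 => hx (h x h0))

lemma shift1 (g : ℤ × ℤ → ℝ) : ∑ᶠ x : ℤ × ℤ, g (x.1 + 1, x.2) = ∑ᶠ x : ℤ × ℤ, g x := by
  have h := finsum_comp_equiv (Equiv.addRight ((1, 0) : ℤ × ℤ)) (f := g)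
  rw [← h]
  refine finsum_congr fun x => ?_
  congr 1
  simp [Prod.ext_iff]

lemma shift2 (g : ℤ × ℤ → ℝ) : ∑ᶠ x : ℤ × ℤ, g (x.1, x.2 + 1) = ∑ᶠ x : ℤ × ℤ, g x := by
  have h := finsum_comp_equiv (Equiv.addRight ((0, 1) : ℤ × ℤ)) (f := g)
  rw [← h]
  refine finsum_congr fun x => ?_
  congr 1
  simp [Prod.ext_iff]

lemma finsupp_comp1 {g : ℤ × ℤ → ℝ} (hg : (Function.support g).Finite) :
    (Function.support fun x : ℤ × ℤ => g (x.1 + 1, x.2)).Finite := by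
  have h : (Function.support fun x : ℤ × ℤ => g (x.1 + 1, x.2))
      = (fun x : ℤ × ℤ => ((x.1 + 1 : ℤ), x.2)) ⁻¹' Function.support g := rfl
  rw [h]
  refine Set.Finite.preimage ?_ hg
  intro a _ b _ hab
  have h1 := congrArg Prod.fst hab
  have h2 := congrArg Prod.snd hab
  simp only at h1 h2
  exact Prod.ext (by omega) h2

lemma finsupp_comp2 {g : ℤ × ℤ → ℝ} (hg : (Function.support g).Finite) :
    (Function.support fun x : ℤ × ℤ => g (x.1, x.2 + 1)).Finite := by
  have h : (Function.support fun x : ℤ × ℤ => g (x.1, x.2 + 1))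
      = (fun x : ℤ × ℤ => (x.1, (x.2 + 1 : ℤ))) ⁻¹' Function.support g := rfl
  rw [h]
  refine Set.Finite.preimage ?_ hg
  intro a _ b _ hab
  have h1 := congrArg Prod.fst hab
  have h2 := congrArg Prod.snd hab
  simp only at h1 h2
  exact Prod.ext h1 (by omega)

lemma tele1 {g : ℤ × ℤ → ℝ} (hg : (Function.support g).Finite) :
    ∑ᶠ x : ℤ × ℤ, (g (x.1 + 1, x.2) - g x) = 0 := by
  rw [finsum_sub_distrib (finsupp_comp1 hg) hg, shift1, sub_self]

lemma tele2 {g : ℤ × ℤ → ℝ} (hg : (Function.support g).Finite) :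
    ∑ᶠ x : ℤ × ℤ, (g (x.1, x.2 + 1) - g x) = 0 := by
  rw [finsum_sub_distrib (finsupp_comp2 hg) hg, shift2, sub_self]

def s1 : Fin 2 → MvPolynomial (Fin 2) ℝ := fun i => if i = 0 then X 0 + 1 else X 1
def s2 : Fin 2 → MvPolynomial (Fin 2) ℝ := fun i => if i = 0 then X 0 else X 1 + 1

lemma eval_bind1 (f : Fin 2 → ℝ) (g : Fin 2 → MvPolynomial (Fin 2) ℝ)
    (p : MvPolynomial (Fin 2) ℝ) :
    eval f (bind₁ g p) = eval (fun i => eval f (g i)) p := by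
  have h := aeval_bind₁ (R := ℝ) f g p
  exact h

lemma pev_bind_s1 (p : MvPolynomial (Fin 2) ℝ) (x : ℤ × ℤ) :
    pev (bind₁ s1 p) x = pev p (x.1 + 1, x.2) := by
  unfold pev
  rw [eval_bind1]
  have h : (fun i => eval (fun i => if i = 0 then (x.1 : ℝ) else (x.2 : ℝ)) (s1 i))
      = (fun i : Fin 2 => if i = 0 then (((x.1 + 1, x.2) : ℤ × ℤ).1 : ℝ)
          else (((x.1 + 1, x.2) : ℤ × ℤ).2 : ℝ)) := by
    funext i
    fin_cases i <;> simp [s1]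
  rw [h]

lemma pev_bind_s2 (p : MvPolynomial (Fin 2) ℝ) (x : ℤ × ℤ) :
    pev (bind₁ s2 p) x = pev p (x.1, x.2 + 1) := by
  unfold pev
  rw [eval_bind1]
  have h : (fun i => eval (fun i => if i = 0 then (x.1 : ℝ) else (x.2 : ℝ)) (s2 i))
      = (fun i : Fin 2 => if i = 0 then (((x.1, x.2 + 1) : ℤ × ℤ).1 : ℝ)
          else (((x.1, x.2 + 1) : ℤ × ℤ).2 : ℝ)) := by
    funext i
    fin_cases i <;> simp [s2]
  rw [h]

/-- if `W·𝒟` is self-adjoint, `W` is finitely supported, and the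
cross-condition `ℒ(A₁₂ g(·−e₂)) = ℒ(A₂₁ g(·−e₁))` holds for all polynomials `g`, then
polynomial eigenfunctions of `𝒟` with distinct eigenvalues are orthogonal
with respect to `W`. -/
theorem stmt11 (A11 A12 A21 A22 B1 B2 : MvPolynomial (Fin 2) ℝ)
    (W : ℤ × ℤ → ℝ) (hW : (Function.support W).Finite)
    (hsa1 : ∀ x : ℤ × ℤ, W x * pev B1 x =
      fd1 (fun y => W y * pev A11 y) x + fd2 (fun y => W y * pev A12 y) x)
    (hsa2 : ∀ x : ℤ × ℤ, W x * pev B2 x =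
      fd1 (fun y => W y * pev A21 y) x + fd2 (fun y => W y * pev A22 y) x)
    (hcross : ∀ g : MvPolynomial (Fin 2) ℝ,
      ∑ᶠ x : ℤ × ℤ, W x * pev A12 x * pev g (x.1, x.2 - 1) =
        ∑ᶠ x : ℤ × ℤ, W x * pev A21 x * pev g (x.1 - 1, x.2))
    (u v : MvPolynomial (Fin 2) ℝ) (lam mu : ℝ) (hlm : lam ≠ mu)
    (hu : Dop A11 A12 A21 A22 B1 B2 (pev u) = (fun x => lam * pev u x))
    (hv : Dop A11 A12 A21 A22 B1 B2 (pev v) = (fun x => mu * pev v x)) :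
    ∑ᶠ x : ℤ × ℤ, W x * pev u x * pev v x = 0 := by
  classical
  set P : ℤ × ℤ → ℝ := fun x => W x *
      (pev A11 x * (pev u x * pev v (x.1 - 1, x.2) - pev u (x.1 - 1, x.2) * pev v x)
      + pev A21 x * (pev u (x.1 - 1, x.2 + 1) * pev v (x.1 - 1, x.2)
          - pev v (x.1 - 1, x.2 + 1) * pev u (x.1 - 1, x.2))) with hPdef
  set Q : ℤ × ℤ → ℝ := fun x => W x *
      (pev A12 x * (pev u (x.1 + 1, x.2 - 1) * pev v (x.1, x.2 - 1)
          - pev v (x.1 + 1, x.2 - 1) * pev u (x.1, x.2 - 1))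
      + pev A22 x * (pev u x * pev v (x.1, x.2 - 1) - pev u (x.1, x.2 - 1) * pev v x))
      with hQdef
  set Φ : ℤ × ℤ → ℝ := fun y =>
      (pev u (y.1 + 1, y.2) - pev u y) * (pev v (y.1, y.2 + 1) - pev v y)
      - (pev u (y.1, y.2 + 1) - pev u y) * (pev v (y.1 + 1, y.2) - pev v y) with hFdef
  -- the cross-polynomial
  set G : MvPolynomial (Fin 2) ℝ :=
      (bind₁ s1 u - u) * (bind₁ s2 v - v) - (bind₁ s2 u - u) * (bind₁ s1 v - v) with hGdef
  have hG : ∀ y : ℤ × ℤ, pev G y = Φ y := by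
    intro y
    have e1 := pev_bind_s1 u y
    have e2 := pev_bind_s2 v y
    have e3 := pev_bind_s2 u y
    have e4 := pev_bind_s1 v y
    simp only [hGdef, hFdef, pev, map_sub, map_mul] at e1 e2 e3 e4 ⊢
    rw [e1, e2, e3, e4]
  -- key pointwise identity
  have key : ∀ x : ℤ × ℤ, (lam - mu) * (W x * pev u x * pev v x) =
      (P (x.1 + 1, x.2) - P x) + (Q (x.1, x.2 + 1) - Q x) +
      (W x * pev A21 x * Φ (x.1 - 1, x.2) - W x * pev A12 x * Φ (x.1, x.2 - 1)) := by
    rintro ⟨x1, x2⟩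
    have h1 := hsa1 (x1, x2)
    have h2 := hsa2 (x1, x2)
    have eu := congrFun hu (x1, x2)
    have ev := congrFun hv (x1, x2)
    simp only [Dop, fd1, fd2, bd1, bd2] at eu ev h1 h2
    simp only [hPdef, hQdef, hFdef]
    simp only [Int.add_sub_cancel, Int.sub_add_cancel] at eu ev h1 h2 ⊢
    linear_combination - (W (x1, x2) * pev v (x1, x2)) * eu
      + (W (x1, x2) * pev u (x1, x2)) * ev
      + (pev u (x1 + 1, x2) * pev v (x1, x2) - pev u (x1, x2) * pev v (x1 + 1, x2)) * h1
      + (pev u (x1, x2 + 1) * pev v (x1, x2) - pev u (x1, x2) * pev v (x1, x2 + 1)) * h2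
  -- finiteness facts
  have hP : (Function.support P).Finite := by
    refine suppW hW fun x h0 => ?_
    simp only [hPdef, h0, zero_mul]
  have hQ : (Function.support Q).Finite := by
    refine suppW hW fun x h0 => ?_
    simp only [hQdef, h0, zero_mul]
  have hC1 : (Function.support fun x : ℤ × ℤ =>
      W x * pev A21 x * Φ (x.1 - 1, x.2)).Finite := by
    refine suppW hW fun x h0 => ?_
    simp only [h0, zero_mul]
  have hC2 : (Function.support fun x : ℤ × ℤ =>
      W x * pev A12 x * Φ (x.1, x.2 - 1)).Finite := by
    refine suppW hW fun x h0 => ?_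
    simp only [h0, zero_mul]
  have hT1 : (Function.support fun x : ℤ × ℤ => P (x.1 + 1, x.2) - P x).Finite :=
    ((finsupp_comp1 hP).union hP).subset (fun x hx => by
      simp only [Function.mem_support, Set.mem_union] at hx ⊢
      by_contra h
      push_neg at h
      exact hx (by rw [h.1, h.2, sub_self]))
  have hT2 : (Function.support fun x : ℤ × ℤ => Q (x.1, x.2 + 1) - Q x).Finite :=
    ((finsupp_comp2 hQ).union hQ).subset (fun x hx => by
      simp only [Function.mem_support, Set.mem_union] at hx ⊢
      by_contra h
      push_neg at h
      exact hx (by rw [h.1, h.2, sub_self]))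
  have hT3 : (Function.support fun x : ℤ × ℤ =>
      W x * pev A21 x * Φ (x.1 - 1, x.2) - W x * pev A12 x * Φ (x.1, x.2 - 1)).Finite := by
    refine suppW hW fun x h0 => ?_
    simp only [h0, zero_mul, sub_zero, sub_self]
  -- cross identity from hcross
  have hcr : ∑ᶠ x : ℤ × ℤ, W x * pev A12 x * Φ (x.1, x.2 - 1) =
      ∑ᶠ x : ℤ × ℤ, W x * pev A21 x * Φ (x.1 - 1, x.2) := by
    have h := hcross G
    simp only [hG] at h
    exact h
  -- summation
  have hmain : (lam - mu) * (∑ᶠ x : ℤ × ℤ, W x * pev u x * pev v x) = 0 := by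
    rw [mul_finsum' _ _ (suppW hW fun x h0 => by rw [h0, zero_mul, zero_mul])]
    rw [finsum_congr key]
    have hT12 : (Function.support fun x : ℤ × ℤ =>
        (P (x.1 + 1, x.2) - P x) + (Q (x.1, x.2 + 1) - Q x)).Finite :=
      ((hT1.union hT2).subset (fun x hx => by
        simp only [Function.mem_support, Set.mem_union] at hx ⊢
        by_contra h
        push_neg at h
        exact hx (by rw [h.1, h.2, add_zero])))
    rw [finsum_add_distrib hT12 hT3, finsum_add_distrib hT1 hT2]
    rw [tele1 hP, tele2 hQ]
    rw [finsum_sub_distrib hC1 hC2, hcr, sub_self]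
    ring
  rcases mul_eq_zero.mp hmain with h | h
  · exact absurd (sub_eq_zero.mp h) hlm
  · exact h
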